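/- For every (ξ,μ) ∈ 𝒫 = (1.18,1.19) × (−10,−9), the planar map g_{ξ,μ} sends each of the parallelograms 𝙰_{ξ,μ} and 𝙱_{ξ,μ} exactly onto the full rectangle: g_{ξ,μ}(𝙰_{ξ,μ}) = g_{ξ,μ}(𝙱_{ξ,μ}) = [−4,4] × [−40,22]. -/

import Mathlib

open Set

/-- The planar endomorphism `g (y,z) = (μ + y², ξ z + y)`. -/
noncomputable def gPlanar (ξ μ : ℝ) : ℝ × ℝ → ℝ × ℝ :=
  fun p => (μ + p.1 ^ 2, ξ * p.2 + p.1)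

noncomputable def am (μ : ℝ) : ℝ := -Real.sqrt (4 - μ)
noncomputable def bm (μ : ℝ) : ℝ := -Real.sqrt (-4 - μ)
noncomputable def cm (μ : ℝ) : ℝ := Real.sqrt (-4 - μ)
noncomputable def dm (μ : ℝ) : ℝ := Real.sqrt (4 - μ)

noncomputable def parA (ξ μ : ℝ) : Set (ℝ × ℝ) :=
  {p | p.1 ∈ Icc (am μ) (bm μ) ∧ (-40 - p.1) / ξ ≤ p.2 ∧ p.2 ≤ (22 - p.1) / ξ}

noncomputable def parB (ξ μ : ℝ) : Set (ℝ × ℝ) :=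
  {p | p.1 ∈ Icc (cm μ) (dm μ) ∧ (-40 - p.1) / ξ ≤ p.2 ∧ p.2 ≤ (22 - p.1) / ξ}

theorem parallelograms_map_onto_rectangle (ξ μ : ℝ)
    (hξ : ξ ∈ Ioo (1.18 : ℝ) 1.19) (hμ : μ ∈ Ioo (-10 : ℝ) (-9)) :
    gPlanar ξ μ '' parA ξ μ = Icc (-4 : ℝ) 4 ×ˢ Icc (-40 : ℝ) 22 ∧
    gPlanar ξ μ '' parB ξ μ = Icc (-4 : ℝ) 4 ×ˢ Icc (-40 : ℝ) 22 := by
  obtain ⟨hξ1, hξ2⟩ := hξ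
  obtain ⟨hμ1, hμ2⟩ := hμ
  have hξ0 : 0 < ξ := by nlinarith
  have h1 : (0:ℝ) ≤ -4 - μ := by linarith
  have h2 : (0:ℝ) ≤ 4 - μ := by linarith
  have hs1 : Real.sqrt (-4 - μ) ^ 2 = -4 - μ := Real.sq_sqrt h1
  have hs2 : Real.sqrt (4 - μ) ^ 2 = 4 - μ := Real.sq_sqrt h2
  have hn1 : 0 ≤ Real.sqrt (-4 - μ) := Real.sqrt_nonneg _
  have hn2 : 0 ≤ Real.sqrt (4 - μ) := Real.sqrt_nonneg _
  constructor <;> ext ⟨u, v⟩ <;>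
    simp only [mem_image, mem_prod, mem_Icc, parA, parB, gPlanar, mem_setOf_eq,
      Prod.mk.injEq, am, bm, cm, dm, Prod.exists] <;>
    constructor
  · rintro ⟨y, z, ⟨⟨hy1, hy2⟩, hz1, hz2⟩, hu, hv⟩
    have hz1' : -40 - y ≤ z * ξ := (div_le_iff₀ hξ0).mp hz1
    have hz2' : z * ξ ≤ 22 - y := (le_div_iff₀ hξ0).mp hz2
    refine ⟨⟨by nlinarith, by nlinarith⟩, by nlinarith, by nlinarith⟩
  · rintro ⟨⟨hu1, hu2⟩, hv1, hv2⟩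
    have hum : (0:ℝ) ≤ u - μ := by linarith
    have hsu : Real.sqrt (u - μ) ^ 2 = u - μ := Real.sq_sqrt hum
    refine ⟨-Real.sqrt (u - μ), (v + Real.sqrt (u - μ)) / ξ,
      ⟨⟨?_, ?_⟩, ?_, ?_⟩, by linarith, ?_⟩
    · exact neg_le_neg (Real.sqrt_le_sqrt (by linarith))
    · exact neg_le_neg (Real.sqrt_le_sqrt (by linarith))
    · apply div_le_div_of_nonneg_right ?_ hξ0.le
      linarith
    · apply div_le_div_of_nonneg_right ?_ hξ0.le
      linarith
    · field_simp
      ring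
  · rintro ⟨y, z, ⟨⟨hy1, hy2⟩, hz1, hz2⟩, hu, hv⟩
    have hz1' : -40 - y ≤ z * ξ := (div_le_iff₀ hξ0).mp hz1
    have hz2' : z * ξ ≤ 22 - y := (le_div_iff₀ hξ0).mp hz2
    refine ⟨⟨by nlinarith, by nlinarith⟩, by nlinarith, by nlinarith⟩
  · rintro ⟨⟨hu1, hu2⟩, hv1, hv2⟩
    have hum : (0:ℝ) ≤ u - μ := by linarith
    have hsu : Real.sqrt (u - μ) ^ 2 = u - μ := Real.sq_sqrt hum
    refine ⟨Real.sqrt (u - μ), (v - Real.sqrt (u - μ)) / ξ,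
      ⟨⟨Real.sqrt_le_sqrt (by linarith), Real.sqrt_le_sqrt (by linarith)⟩, ?_, ?_⟩,
      by linarith, ?_⟩
    · apply div_le_div_of_nonneg_right ?_ hξ0.le
      linarith
    · apply div_le_div_of_nonneg_right ?_ hξ0.le
      linarith
    · field_simp
      ring
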